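/- Let w : ℕ → {a,b} be a right-infinite Sturmian word such that both a·w and b·w are Sturmian. Then there exists an irrational α ∈ (0,1) such that w equals the characteristic word c_α of slope α. -/

import Mathlib

/-!
STATEMENT 6: Let `w` be a right-infinite Sturmian word (`a = false`, `b = true`)
such that both `a·w` and `b·w` are Sturmian. Then there exists an irrational
`α ∈ (0,1)` such that `w` is the characteristic word of slope `α`.
-/

namespace StringBricks

def IsFactor (w : ℕ → Bool) (u : List Bool) : Prop :=
  ∃ i : ℕ, ∀ j : Fin u.length, w (i + j) = u.get j

def BalancedWord (w : ℕ → Bool) : Prop :=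
  ∀ u v : List Bool, IsFactor w u → IsFactor w v → u.length = v.length →
    |(u.count true : ℤ) - (v.count true : ℤ)| ≤ 1

def EventuallyPeriodic (w : ℕ → Bool) : Prop :=
  ∃ N p : ℕ, 1 ≤ p ∧ ∀ n : ℕ, N ≤ n → w (n + p) = w n

def SturmianWord (w : ℕ → Bool) : Prop :=
  BalancedWord w ∧ ¬ EventuallyPeriodic w

noncomputable def charWord (α : ℝ) : ℕ → Bool :=
  fun n => decide (⌊((n : ℝ) + 2) * α⌋ - ⌊((n : ℝ) + 1) * α⌋ = 1)

def consWord (ℓ : Bool) (w : ℕ → Bool) : ℕ → Bool :=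
  fun n => match n with
  | 0 => ℓ
  | n + 1 => w n

def wt (w : ℕ → Bool) (n : ℕ) : ℕ := ∑ i ∈ Finset.range n, (if w i then 1 else 0)

lemma count_ofFn : ∀ (L : ℕ) (g : ℕ → Bool),
    (List.ofFn (fun j : Fin L => g j)).count true
      = ∑ i ∈ Finset.range L, (if g i then 1 else 0) := by
  intro L
  induction L with
  | zero => intro g; simp
  | succ n ih =>
      intro g
      rw [List.ofFn_succ, Finset.sum_range_succ', List.count_cons]
      simp only [Fin.val_succ, Fin.val_zero]
      rw [ih (fun i => g (i+1))]
      simp [beq_iff_eq]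

lemma isFactor_ofFn (v : ℕ → Bool) (i L : ℕ) :
    IsFactor v (List.ofFn (fun j : Fin L => v (i + j))) := by
  refine ⟨i, fun j => ?_⟩
  simp [List.get_ofFn]

lemma wt_add (w : ℕ → Bool) (i L : ℕ) :
    wt w (i + L) = wt w i + ∑ j ∈ Finset.range L, (if w (i + j) then 1 else 0) := by
  unfold wt
  rw [Finset.sum_range_add]

-- count of the window list of an extension
lemma window_count (w : ℕ → Bool) (ℓ : Bool) (i n : ℕ) :
    (List.ofFn (fun j : Fin (n+1) => consWord ℓ w (i + 1 + j))).count true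
      + wt w i = wt w (i + n + 1) := by
  rw [count_ofFn (n+1) (fun m => consWord ℓ w (i + 1 + m))]
  have h1 : ∀ j, consWord ℓ w (i + 1 + j) = w (i + j) := by
    intro j
    have : i + 1 + j = (i + j) + 1 := by omega
    rw [this]
    rfl
  have h2 : (∑ j ∈ Finset.range (n+1), (if consWord ℓ w (i + 1 + j) then 1 else 0))
      = ∑ j ∈ Finset.range (n+1), (if w (i + j) then 1 else 0) := by
    apply Finset.sum_congr rfl
    intro j _
    rw [h1]
  rw [h2]
  have h3 := wt_add w i (n+1)
  rw [show i + (n+1) = i + n + 1 from rfl] at h3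
  omega

lemma prefix_count (w : ℕ → Bool) (ℓ : Bool) (n : ℕ) :
    (List.ofFn (fun j : Fin (n+1) => consWord ℓ w j)).count true
      = wt w n + (if ℓ then 1 else 0) := by
  rw [count_ofFn, Finset.sum_range_succ']
  have h1 : ∀ j : ℕ, consWord ℓ w (j + 1) = w j := fun j => rfl
  have h0 : consWord ℓ w 0 = ℓ := rfl
  simp only [h1, h0]
  rfl

lemma prefix_count_true (w : ℕ → Bool) (n : ℕ) :
    (List.ofFn (fun j : Fin (n+1) => consWord true w j)).count true = wt w n + 1 := by
  rw [prefix_count]; rfl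

lemma prefix_count_false (w : ℕ → Bool) (n : ℕ) :
    (List.ofFn (fun j : Fin (n+1) => consWord false w j)).count true = wt w n := by
  rw [prefix_count]; rfl

lemma key (w : ℕ → Bool) (haw : BalancedWord (consWord false w))
    (hbw : BalancedWord (consWord true w)) (i n : ℕ) :
    wt w i + wt w n ≤ wt w (i + n + 1) ∧ wt w (i + n + 1) ≤ wt w i + wt w n + 1 := by
  have hu := isFactor_ofFn (consWord true w) 0 (n+1)
  have hv := isFactor_ofFn (consWord true w) (i+1) (n+1)
  have hu' := isFactor_ofFn (consWord false w) 0 (n+1)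
  have hv' := isFactor_ofFn (consWord false w) (i+1) (n+1)
  have hB := hbw _ _ hu hv (by simp)
  have hA := haw _ _ hu' hv' (by simp)
  have e0 : ∀ (ℓ : Bool) (j : Fin (n+1)), consWord ℓ w (0 + j) = consWord ℓ w j := by
    intro ℓ j; rw [Nat.zero_add]
  simp only [e0] at hB hA
  have c1 := prefix_count_true w n
  have c1' := prefix_count_false w n
  have c2 := window_count w true i n
  have c2' := window_count w false i n
  rw [c1] at hB
  rw [c1'] at hA
  rw [abs_le] at hB hA
  omega

def G (w : ℕ → Bool) (n : ℕ) : ℕ := wt w (n - 1)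

lemma wt_zero (w : ℕ → Bool) : wt w 0 = 0 := by simp [wt]

lemma G_zero (w : ℕ → Bool) : G w 0 = 0 := by simp [G, wt_zero]
lemma G_one (w : ℕ → Bool) : G w 1 = 0 := by simp [G, wt_zero]

lemma superadd (w : ℕ → Bool) (haw : BalancedWord (consWord false w))
    (hbw : BalancedWord (consWord true w)) (p q : ℕ) :
    G w p + G w q ≤ G w (p + q) ∧ G w (p + q) ≤ G w p + G w q + 1 := by
  match p, q with
  | 0, q => simp [G_zero]
  | p+1, 0 => simp [G_zero]
  | i+1, n+1 =>
      have h := key w haw hbw i n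
      have e1 : G w (i+1) = wt w i := by simp [G]
      have e2 : G w (n+1) = wt w n := by simp [G]
      have e3 : G w (i+1+(n+1)) = wt w (i + n + 1) := by
        simp [G]
        congr 1
        omega
      rw [e1, e2, e3]
      exact h

lemma G_mul (w : ℕ → Bool) (haw : BalancedWord (consWord false w))
    (hbw : BalancedWord (consWord true w)) (k p : ℕ) :
    k * G w p ≤ G w (k * p) ∧ G w (k * p) ≤ k * G w p + (k - 1) := by
  induction k with
  | zero => simp [G_zero]
  | succ k ih =>
      have h := superadd w haw hbw (k*p) p
      have e : (k+1) * p = k * p + p := by ring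
      rw [e]
      cases k with
      | zero => simpa using h
      | succ m =>
          constructor
          · have : (m+1+1) * G w p = (m+1) * G w p + G w p := by ring
            omega
          · have : (m+1+1) * G w p = (m+1) * G w p + G w p := by ring
            omega

lemma G_compare (w : ℕ → Bool) (haw : BalancedWord (consWord false w))
    (hbw : BalancedWord (consWord true w)) (p q : ℕ) :
    q * G w p ≤ p * G w q + p := by
  have h1 := (G_mul w haw hbw q p).1
  have h2 := (G_mul w haw hbw p q).2
  have e : q * p = p * q := by ring
  rw [e] at h1
  omega

lemma wt_succ (w : ℕ → Bool) (n : ℕ) :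
    wt w (n + 1) = wt w n + (if w n then 1 else 0) := by
  unfold wt
  exact Finset.sum_range_succ _ n

lemma wt_le (w : ℕ → Bool) (n : ℕ) : wt w n ≤ n := by
  induction n with
  | zero => simp [wt_zero]
  | succ n ih => rw [wt_succ]; split <;> omega

lemma G_succ_succ (w : ℕ → Bool) (n : ℕ) :
    G w (n + 2) = G w (n + 1) + (if w n then 1 else 0) := by
  show wt w (n + 1) = wt w n + _
  exact wt_succ w n

lemma mono_eventually_const (Φ : ℕ → ℤ) (mono : ∀ n, Φ n ≤ Φ (n+1)) (C : ℤ)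
    (bdd : ∀ n, Φ n ≤ C) : ∃ N, ∀ n, N ≤ n → Φ (n+1) = Φ n := by
  by_contra h
  push_neg at h
  have mono' : Monotone Φ := monotone_nat_of_le_succ mono
  have grow : ∀ k : ℕ, ∃ n, Φ 0 + k ≤ Φ n := by
    intro k
    induction k with
    | zero => exact ⟨0, by simp⟩
    | succ k ih =>
        obtain ⟨n, hn⟩ := ih
        obtain ⟨m, hm, hne⟩ := h n
        have h1 : Φ n ≤ Φ m := mono' hm
        have h2 : Φ m < Φ (m+1) := lt_of_le_of_ne (mono m) (Ne.symm hne)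
        exact ⟨m+1, by push_cast; omega⟩
  obtain ⟨n, hn⟩ := grow (C - Φ 0 + 1).toNat
  have := bdd n
  omega

theorem characteristic_of_both_cons_sturmian (w : ℕ → Bool)
    (hw : SturmianWord w) (haw : SturmianWord (consWord false w))
    (hbw : SturmianWord (consWord true w)) :
    ∃ α : ℝ, Irrational α ∧ 0 < α ∧ α < 1 ∧ w = charWord α := by
  obtain ⟨hwB, hwNP⟩ := hw
  have hA := haw.1
  have hB := hbw.1
  -- the set of lower slope approximations
  set S : Set ℝ := Set.range (fun n : ℕ => (G w (n+1) : ℝ)/(n+1)) with hS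
  have hSne : S.Nonempty := ⟨_, ⟨0, rfl⟩⟩
  have hSbdd : BddAbove S := by
    refine ⟨1, ?_⟩
    rintro x ⟨n, rfl⟩
    have h1 : G w (n+1) ≤ n + 1 := le_trans (wt_le w n) (by omega)
    have hpos : (0:ℝ) < (n:ℝ) + 1 := by positivity
    rw [div_le_one (by push_cast at hpos ⊢; exact hpos)]
    exact_mod_cast h1
  set α : ℝ := sSup S with hα
  have hle : ∀ n : ℕ, (G w (n+1) : ℝ)/(n+1) ≤ α :=
    fun n => le_csSup hSbdd ⟨n, rfl⟩
  have hge : ∀ n : ℕ, α ≤ ((G w (n+1) : ℝ) + 1)/(n+1) := by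
    intro n
    refine csSup_le hSne ?_
    rintro x ⟨m, rfl⟩
    have hcmp := G_compare w hA hB (m+1) (n+1)
    have hm : (0:ℝ) < (m:ℝ) + 1 := by positivity
    have hn : (0:ℝ) < (n:ℝ) + 1 := by positivity
    rw [div_le_div_iff₀ hm hn]
    have : ((n:ℝ)+1) * (G w (m+1)) ≤ ((m:ℝ)+1) * (G w (n+1)) + ((m:ℝ)+1) := by
      exact_mod_cast hcmp
    nlinarith
  -- multiplied forms
  have hle' : ∀ n : ℕ, (G w (n+1) : ℝ) ≤ ((n:ℝ)+1) * α := by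
    intro n
    have h := hle n
    have hn : (0:ℝ) < (n:ℝ) + 1 := by positivity
    rw [div_le_iff₀ hn] at h
    linarith
  have hge' : ∀ n : ℕ, ((n:ℝ)+1) * α ≤ (G w (n+1) : ℝ) + 1 := by
    intro n
    have h := hge n
    have hn : (0:ℝ) < (n:ℝ) + 1 := by positivity
    rw [le_div_iff₀ hn] at h
    linarith
  -- there is a false letter and a true letter
  have hexf : ∃ k, w k = false := by
    by_contra h
    push_neg at h
    exact hwNP ⟨0, 1, le_refl 1, fun n _ => by
      have h1 := h (n+1); have h2 := h n
      simp only [Bool.not_eq_false] at h1 h2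
      rw [h1, h2]⟩
  have hext : ∃ k, w k = true := by
    by_contra h
    push_neg at h
    simp only [Bool.not_eq_true] at h
    exact hwNP ⟨0, 1, le_refl 1, fun n _ => by rw [h (n+1), h n]⟩
  -- 0 < α
  have hα0 : 0 < α := by
    obtain ⟨k, hk⟩ := hext
    have h1 : 1 ≤ wt w (k+1) := by rw [wt_succ, hk]; simp
    have h2 : G w (k+1+1) = wt w (k+1) := rfl
    have h4 : (0:ℝ) < (G w (k+1+1) : ℝ) := by
      rw [h2]; exact_mod_cast h1
    exact lt_of_lt_of_le (div_pos h4 (by positivity)) (hle (k+1))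
  -- α < 1
  have hα1 : α < 1 := by
    obtain ⟨k, hk⟩ := hexf
    have h1 : wt w (k+1) ≤ k := by
      rw [wt_succ, hk]
      have := wt_le w k
      simp; omega
    have h2 : G w (k+1+1) = wt w (k+1) := rfl
    have h3 := hge (k+1)
    have h4 : ((G w (k+1+1) : ℝ) + 1)/(((k+1:ℕ):ℝ)+1) < 1 := by
      rw [div_lt_one (by positivity)]
      have : (G w (k+1+1) : ℝ) ≤ (k:ℝ) := by rw [h2]; exact_mod_cast h1
      push_cast
      linarith
    exact lt_of_le_of_lt h3 h4
  -- α is irrational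
  have hirr : Irrational α := by
    rw [Irrational]
    intro hmem
    obtain ⟨r, hr⟩ := hmem
    have hr0 : 0 < r := by
      have : ((r:ℚ):ℝ) > 0 := by rw [hr]; exact hα0
      exact_mod_cast this
    set q : ℕ := r.den with hqdef
    set p : ℕ := r.num.toNat with hpdef
    have hq1 : 1 ≤ q := r.pos
    have hqR : (0:ℝ) < (q:ℝ) := by positivity
    have hq0 : (q:ℝ) ≠ 0 := ne_of_gt hqR
    have hnum : ((r.num : ℤ) : ℝ) = (p : ℝ) := by
      have h0 : (0:ℤ) ≤ r.num := le_of_lt (Rat.num_pos.mpr hr0)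
      rw [hpdef]
      exact_mod_cast (Int.toNat_of_nonneg h0).symm
    have hαpq : α * q = p := by
      rw [← hr, Rat.cast_def, hnum]
      field_simp
      rfl
    -- G w q is p or p - 1
    have hq' : q = (q - 1) + 1 := by omega
    have hGq_le : G w q ≤ p := by
      have h := hle' (q-1)
      rw [← hq'] at h
      have hqcast : ((q-1:ℕ):ℝ) + 1 = (q:ℝ) := by
        rw [Nat.cast_sub hq1]; push_cast; ring
      have : (G w q : ℝ) ≤ (p : ℝ) := by
        rw [← hαpq]
        calc (G w q : ℝ) ≤ (((q-1:ℕ):ℝ)+1) * α := h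
        _ = α * q := by rw [hqcast]; ring
      exact_mod_cast this
    have hGq_ge : p ≤ G w q + 1 := by
      have h := hge' (q-1)
      rw [← hq'] at h
      have hqcast : ((q-1:ℕ):ℝ) + 1 = (q:ℝ) := by
        rw [Nat.cast_sub hq1]; push_cast; ring
      have : (p : ℝ) ≤ (G w q : ℝ) + 1 := by
        rw [← hαpq]
        calc α * (q:ℝ) = (((q-1:ℕ):ℝ)+1) * α := by rw [hqcast]; ring
        _ ≤ (G w q : ℝ) + 1 := h
      exact_mod_cast this
    -- D n = q * G n - n * p  (as integers)
    set D : ℕ → ℤ := fun n => (q:ℤ) * (G w n : ℤ) - (n:ℤ) * (p:ℤ) with hD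
    have hDub : ∀ n, D n ≤ 0 := by
      intro n
      match n with
      | 0 => simp [hD, G_zero]
      | n+1 =>
        have h := hle' n
        have : (q:ℝ) * (G w (n+1) : ℝ) ≤ ((n:ℝ)+1) * (q:ℝ) * α := by nlinarith
        have h2 : (q:ℝ) * (G w (n+1) : ℝ) ≤ ((n:ℝ)+1) * (p:ℝ) := by
          calc (q:ℝ) * (G w (n+1) : ℝ) ≤ ((n:ℝ)+1) * (q:ℝ) * α := this
          _ = ((n:ℝ)+1) * (α * q) := by ring
          _ = ((n:ℝ)+1) * (p:ℝ) := by rw [hαpq]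
        have h3 : (q:ℤ) * (G w (n+1) : ℤ) ≤ ((n:ℤ)+1) * (p:ℤ) := by exact_mod_cast h2
        simp only [hD]
        push_cast
        linarith
    have hDlb : ∀ n, -(q:ℤ) ≤ D n := by
      intro n
      match n with
      | 0 => simp [hD, G_zero]
      | n+1 =>
        have h := hge' n
        have h2 : ((n:ℝ)+1) * (p:ℝ) ≤ (q:ℝ) * ((G w (n+1) : ℝ) + 1) := by
          calc ((n:ℝ)+1) * (p:ℝ) = ((n:ℝ)+1) * (α * q) := by rw [hαpq]
          _ = (q:ℝ) * (((n:ℝ)+1) * α) := by ring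
          _ ≤ (q:ℝ) * ((G w (n+1) : ℝ) + 1) := by nlinarith
        have h3 : ((n:ℤ)+1) * (p:ℤ) ≤ (q:ℤ) * ((G w (n+1) : ℤ) + 1) := by exact_mod_cast h2
        simp only [hD]
        push_cast
        linarith
    -- the comparison sequence
    set Φ : ℕ → ℤ := fun n => ∑ j ∈ Finset.range q, D (n + j) with hΦ
    have hΦstep : ∀ n, Φ (n+1) - Φ n = D (n + q) - D n := by
      intro n
      have e1 : Φ (n+1) = ∑ j ∈ Finset.range q, D (n + (j+1)) := by
        apply Finset.sum_congr rfl
        intro j _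
        congr 1
        omega
      have e2 : (∑ j ∈ Finset.range (q+1), D (n + j))
          = D (n + 0) + ∑ j ∈ Finset.range q, D (n + (j+1)) := by
        rw [Finset.sum_range_succ']
        ring
      have e3 : (∑ j ∈ Finset.range (q+1), D (n + j))
          = (∑ j ∈ Finset.range q, D (n + j)) + D (n + q) := Finset.sum_range_succ _ _
      rw [e1]
      have e4 : D (n+0) = D n := by norm_num
      have e5 : Φ n = ∑ j ∈ Finset.range q, D (n + j) := rfl
      omega
    have hΦub : ∀ n, Φ n ≤ 0 := by
      intro n
      have : ∀ j ∈ Finset.range q, D (n + j) ≤ 0 := fun j _ => hDub (n+j)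
      calc Φ n ≤ ∑ j ∈ Finset.range q, (0:ℤ) := Finset.sum_le_sum this
      _ = 0 := by simp
    have hΦlb : ∀ n, -(q:ℤ)*(q:ℤ) ≤ Φ n := by
      intro n
      have : ∀ j ∈ Finset.range q, -(q:ℤ) ≤ D (n + j) := fun j _ => hDlb (n+j)
      calc -(q:ℤ)*(q:ℤ) = ∑ _j ∈ Finset.range q, (-(q:ℤ)) := by
            rw [Finset.sum_const, Finset.card_range]
            push_cast
            ring
      _ ≤ Φ n := Finset.sum_le_sum this
    -- in either case, D is eventually constant along steps of q
    have hG_cases : G w q = p ∨ G w q + 1 = p := by omega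
    have hconst : ∃ N, ∀ n, N ≤ n → D (n + q) = D n := by
      rcases hG_cases with hg | hg
      · -- D nondecreasing along +q, Φ nondecreasing
        have hstep : ∀ n, D n ≤ D (n + q) := by
          intro n
          have h := (superadd w hA hB n q).1
          simp only [hD]
          have : (G w n : ℤ) + (p:ℤ) ≤ (G w (n+q) : ℤ) := by
            rw [← hg]; exact_mod_cast h
          push_cast
          nlinarith [this, show (0:ℤ) ≤ (q:ℤ) from by positivity]
        have hmono : ∀ n, Φ n ≤ Φ (n+1) := by
          intro n
          have ha := hΦstep n
          have hb := hstep n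
          omega
        obtain ⟨N, hN⟩ := mono_eventually_const Φ hmono 0 hΦub
        refine ⟨N, fun n hn => ?_⟩
        have h1 := hN n hn
        have h2 := hΦstep n
        have h3 := hstep n
        omega
      · -- D nonincreasing along +q
        have hstep : ∀ n, D (n + q) ≤ D n := by
          intro n
          have h := (superadd w hA hB n q).2
          simp only [hD]
          have : (G w (n+q) : ℤ) ≤ (G w n : ℤ) + (p:ℤ) := by
            have h2 : G w (n+q) ≤ G w n + p := by omega
            exact_mod_cast h2
          push_cast
          nlinarith [this, show (0:ℤ) ≤ (q:ℤ) from by positivity]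
        have hmono : ∀ n, (fun m => -Φ m) n ≤ (fun m => -Φ m) (n+1) := by
          intro n
          have ha := hΦstep n
          have hb := hstep n
          simp only
          omega
        obtain ⟨N, hN⟩ := mono_eventually_const (fun m => -Φ m) hmono ((q:ℤ)*(q:ℤ))
          (fun n => by have := hΦlb n; linarith)
        refine ⟨N, fun n hn => ?_⟩
        have h1 := hN n hn
        have h2 := hΦstep n
        have h3 := hstep n
        omega
    obtain ⟨N, hN⟩ := hconst
    -- G w (n + q) = G w n + p for n ≥ N
    have hGstep : ∀ n, N ≤ n → G w (n + q) = G w n + p := by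
      intro n hn
      have h := hN n hn
      have h2 : (q:ℤ) * (G w (n+q) : ℤ) = (q:ℤ) * ((G w n : ℤ) + (p:ℤ)) := by
        simp only [hD] at h
        push_cast at h ⊢
        linarith
      have h3 : q * G w (n+q) = q * (G w n + p) := by exact_mod_cast h2
      exact Nat.eq_of_mul_eq_mul_left (by omega) h3
    -- w is eventually periodic: contradiction
    apply hwNP
    refine ⟨N, q, hq1, fun n hn => ?_⟩
    have e1 : G w (n + q + 2) = G w (n + q + 1) + (if w (n+q) then 1 else 0) :=
      G_succ_succ w (n+q)
    have e2 : G w (n + 2) = G w (n + 1) + (if w n then 1 else 0) := G_succ_succ w n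
    have e3 : G w (n + 1 + q) = G w (n+1) + p := hGstep (n+1) (by omega)
    have e4 : G w (n + 2 + q) = G w (n+2) + p := hGstep (n+2) (by omega)
    have e5 : n + q + 1 = n + 1 + q := by omega
    have e6 : n + q + 2 = n + 2 + q := by omega
    rw [e5, e6, e3, e4] at e1
    have hiff : (if w (n+q) then 1 else 0 : ℕ) = (if w n then 1 else 0) := by omega
    cases h1 : w (n+q) <;> cases h2 : w n
    · rfl
    · exfalso; rw [h1, h2] at hiff; norm_num at hiff
    · exfalso; rw [h1, h2] at hiff; norm_num at hiff
    · rfl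
  -- conclusion: w = charWord α
  refine ⟨α, hirr, hα0, hα1, ?_⟩
  have hfloor : ∀ n : ℕ, ⌊((n:ℝ)+1) * α⌋ = (G w (n+1) : ℤ) := by
    intro n
    rw [Int.floor_eq_iff]
    constructor
    · push_cast
      exact hle' n
    · push_cast
      have hlt : α < ((G w (n+1) : ℝ) + 1)/((n:ℝ)+1) := by
        rcases lt_or_eq_of_le (hge n) with h | h
        · exact h
        · exfalso
          apply hirr
          refine ⟨((G w (n+1) : ℚ) + 1)/((n:ℚ)+1), ?_⟩
          rw [h]
          push_cast
          ring
      have hn : (0:ℝ) < (n:ℝ)+1 := by positivity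
      rw [lt_div_iff₀ hn] at hlt
      linarith
  funext n
  have c1 := hfloor n
  have c2 : ⌊((n:ℝ)+2) * α⌋ = (G w (n+2) : ℤ) := by
    have := hfloor (n+1)
    push_cast at this
    rw [show ((n:ℝ)+2) = ((n:ℝ)+1+1) by ring]
    exact this
  have e := G_succ_succ w n
  show w n = charWord α n
  unfold charWord
  rw [c1, c2]
  cases h : w n
  · rw [h] at e
    simp only [Bool.false_eq_true, if_false] at e
    have h2 : (G w (n+2) : ℤ) - (G w (n+1) : ℤ) = 0 := by omega
    simp [h2]
  · rw [h] at e
    simp only [if_true] at e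
    have h2 : (G w (n+2) : ℤ) - (G w (n+1) : ℤ) = 1 := by omega
    simp [h2]


end StringBricks
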